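/- Let z ∈ ℂ^8 be of the form z = (Z_1, εw, 0, 0) with Z_1 ∈ ℂ² of norm 1, w ∈ ℂ² of norm 1, ε > 0, and let λ_1,…,λ_4 ∈ ℂ be distinct. Define ρ_i(z) = λ_i - r_λ(z)/r(z), where r(z) = |z|² and r_λ(z) = λ_1(|z_1|²+|z_2|²) + λ_2(|z_3|²+|z_4|²) + λ_3(|z_5|²+|z_6|²) + λ_4(|z_7|²+|z_8|²). Then as ε → 0: ρ_1(z) = O(ε²) while ρ_2(z) → λ_2 - λ_1 ≠ 0, and consequently the limit of ρ_1(z)/|ρ_1(z)| along the sequence z_ε = (Z_1, (ε,0), 0, 0) versus z'_ε = (Z_1, (0,ε), 0, 0) leads to the 2-form (β∧β̄)/‖β‖² having distinct limits dz_4∧dz̄_4 and dz_3∧dz̄_3 respectively; hence (β∧β̄)/‖β‖² does not extend continuously to the locus {ρ_1 = 0, z_3 = z_4 = ⋯ = 0}. -/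

import Mathlib

open Complex Filter Topology Asymptotics

private lemma v8_5 {α : Type*} (a0 a1 a2 a3 a4 a5 a6 a7 : α) :
    (![a0,a1,a2,a3,a4,a5,a6,a7]) (5 : Fin 8) = a5 := rfl

private lemma v8_6 {α : Type*} (a0 a1 a2 a3 a4 a5 a6 a7 : α) :
    (![a0,a1,a2,a3,a4,a5,a6,a7]) (6 : Fin 8) = a6 := rfl

private lemma v8_7 {α : Type*} (a0 a1 a2 a3 a4 a5 a6 a7 : α) :
    (![a0,a1,a2,a3,a4,a5,a6,a7]) (7 : Fin 8) = a7 := rfl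

private lemma quot_cancel (t : ℝ) (ht : t ≠ 0) (x y : ℂ) (s : ℝ) :
    ((t : ℂ) * x) * (starRingEnd ℂ) ((t : ℂ) * y) / ((t ^ 2 * s : ℝ) : ℂ) =
      x * (starRingEnd ℂ) y / ((s : ℝ) : ℂ) := by
  have h2 : ((t : ℂ)) ^ 2 ≠ 0 := pow_ne_zero _ (by exact_mod_cast ht)
  rw [map_mul, Complex.conj_ofReal, Complex.ofReal_mul, Complex.ofReal_pow,
    show (t : ℂ) * x * ((t : ℂ) * (starRingEnd ℂ) y)
      = (t : ℂ) ^ 2 * (x * (starRingEnd ℂ) y) by ring,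
    mul_div_mul_left _ _ h2]

private lemma keyTendsto (c : ℝ → Fin 8 → ℂ) (hc : ∀ j, Continuous fun ε => c ε j)
    (hS : (∑ l, Complex.normSq (c 0 l)) ≠ 0) :
    Tendsto (fun ε : ℝ => (fun j k => c ε j * (starRingEnd ℂ) (c ε k) /
        ((∑ l, Complex.normSq (c ε l) : ℝ) : ℂ) : Matrix (Fin 8) (Fin 8) ℂ)) (𝓝 0)
      (𝓝 (fun j k => c 0 j * (starRingEnd ℂ) (c 0 k) /
        ((∑ l, Complex.normSq (c 0 l) : ℝ) : ℂ))) := by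
  rw [tendsto_pi_nhds]
  intro j
  rw [tendsto_pi_nhds]
  intro k
  have hnum : Continuous fun ε : ℝ => c ε j * (starRingEnd ℂ) (c ε k) :=
    (hc j).mul (Complex.continuous_conj.comp (hc k))
  have hden : Continuous fun ε : ℝ => ((∑ l, Complex.normSq (c ε l) : ℝ) : ℂ) :=
    Complex.continuous_ofReal.comp
      (continuous_finset_sum _ fun l _ => Complex.continuous_normSq.comp (hc l))
  exact (hnum.tendsto 0).div (hden.tendsto 0) (by exact_mod_cast hS)

/-- non-removable singularity of the SU(7)-structure on `ℂP⁷`.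
With `β = ᵗZ diag(ρ₁J, ρ₂J, ρ₃J, ρ₄J) dZ` (components `b`),
`ρ_i(z) = λ_i - r_λ(z)/r(z)`, and the coefficient matrix
`T(z)_{jk} = b_j b̄_k / ‖β‖²` of `(β∧β̄)/‖β‖²`: along `z_ε = (Z₁, (ε,0), 0, 0)`
one has `ρ₁ = O(ε²)`, `ρ₂ → λ₂ - λ₁ ≠ 0`, and `T` tends to the coefficient
matrix of `dz₄∧dz̄₄`, while along `z'_ε = (Z₁, (0,ε), 0, 0)` it tends to that of
`dz₃∧dz̄₃`; hence `(β∧β̄)/‖β‖²` admits no common limit, i.e. does not extend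
continuously to the locus `{ρ₁ = 0, z₃ = ⋯ = z₈ = 0}`. -/
theorem stmt19 (Z : Fin 2 → ℂ) (hZ : Complex.normSq (Z 0) + Complex.normSq (Z 1) = 1)
    (lam : Fin 4 → ℂ) (hlam : Function.Injective lam) :
    let r : (Fin 8 → ℂ) → ℝ := fun z => ∑ j, Complex.normSq (z j)
    let rl : (Fin 8 → ℂ) → ℂ := fun z =>
      lam 0 * ((Complex.normSq (z 0) + Complex.normSq (z 1) : ℝ) : ℂ) +
      lam 1 * ((Complex.normSq (z 2) + Complex.normSq (z 3) : ℝ) : ℂ) +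
      lam 2 * ((Complex.normSq (z 4) + Complex.normSq (z 5) : ℝ) : ℂ) +
      lam 3 * ((Complex.normSq (z 6) + Complex.normSq (z 7) : ℝ) : ℂ)
    let ρ : Fin 4 → (Fin 8 → ℂ) → ℂ := fun i z => lam i - rl z / ((r z : ℝ) : ℂ)
    let b : (Fin 8 → ℂ) → (Fin 8 → ℂ) := fun z =>
      ![-(ρ 0 z) * z 1, ρ 0 z * z 0, -(ρ 1 z) * z 3, ρ 1 z * z 2,
        -(ρ 2 z) * z 5, ρ 2 z * z 4, -(ρ 3 z) * z 7, ρ 3 z * z 6]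
    let T : (Fin 8 → ℂ) → Matrix (Fin 8) (Fin 8) ℂ := fun z j k =>
      b z j * (starRingEnd ℂ) (b z k) /
        (((∑ l, Complex.normSq (b z l) : ℝ)) : ℂ)
    let zseq : ℝ → (Fin 8 → ℂ) := fun ε =>
      ![Z 0, Z 1, (ε : ℂ), 0, 0, 0, 0, 0]
    let zseq' : ℝ → (Fin 8 → ℂ) := fun ε =>
      ![Z 0, Z 1, 0, (ε : ℂ), 0, 0, 0, 0]
    ((fun ε : ℝ => ρ 0 (zseq ε)) =O[𝓝[>] (0 : ℝ)] fun ε => ε ^ 2) ∧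
    Tendsto (fun ε : ℝ => ρ 1 (zseq ε)) (𝓝[>] (0 : ℝ))
      (𝓝 (lam 1 - lam 0)) ∧
    lam 1 - lam 0 ≠ 0 ∧
    Tendsto (fun ε : ℝ => T (zseq ε)) (𝓝[>] (0 : ℝ))
      (𝓝 (Matrix.single 3 3 (1 : ℂ))) ∧
    Tendsto (fun ε : ℝ => T (zseq' ε)) (𝓝[>] (0 : ℝ))
      (𝓝 (Matrix.single 2 2 (1 : ℂ))) ∧
    ¬ ∃ L : Matrix (Fin 8) (Fin 8) ℂ,
        Tendsto (fun ε : ℝ => T (zseq ε)) (𝓝[>] (0 : ℝ)) (𝓝 L) ∧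
        Tendsto (fun ε : ℝ => T (zseq' ε)) (𝓝[>] (0 : ℝ)) (𝓝 L) := by
  intro r rl ρ b T zseq zseq'
  have hrdef : r = fun z => ∑ j, Complex.normSq (z j) := rfl
  have hrldef : rl = fun z =>
      lam 0 * ((Complex.normSq (z 0) + Complex.normSq (z 1) : ℝ) : ℂ) +
      lam 1 * ((Complex.normSq (z 2) + Complex.normSq (z 3) : ℝ) : ℂ) +
      lam 2 * ((Complex.normSq (z 4) + Complex.normSq (z 5) : ℝ) : ℂ) +
      lam 3 * ((Complex.normSq (z 6) + Complex.normSq (z 7) : ℝ) : ℂ) := rfl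
  have hρdef : ρ = fun i z => lam i - rl z / ((r z : ℝ) : ℂ) := rfl
  have hz1 : zseq = fun ε : ℝ => ![Z 0, Z 1, (ε : ℂ), 0, 0, 0, 0, 0] := rfl
  have hz2 : zseq' = fun ε : ℝ => ![Z 0, Z 1, 0, (ε : ℂ), 0, 0, 0, 0] := rfl
  have hμ : lam 1 - lam 0 ≠ 0 :=
    sub_ne_zero_of_ne fun h => absurd (hlam h) (by decide)
  set μ : ℂ := lam 1 - lam 0 with hμdef
  have h1 : ∀ ε : ℝ, (0 : ℝ) < 1 + ε ^ 2 := fun ε => by positivity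
  have h1c : ∀ ε : ℝ, ((1 + ε ^ 2 : ℝ) : ℂ) ≠ 0 := fun ε => by
    exact_mod_cast (h1 ε).ne'
  have h1c' : ∀ ε : ℝ, (1 + (ε : ℂ) ^ 2) ≠ 0 := fun ε => by
    have := h1c ε; push_cast at this; exact this
  -- values of ρ 0 and ρ 1 along the two curves
  have hρ0 : ∀ ε : ℝ, ρ 0 (zseq ε) = -μ * ((ε ^ 2 / (1 + ε ^ 2) : ℝ) : ℂ) := by
    intro ε
    simp only [hρdef, hrldef, hrdef, hz1, Fin.sum_univ_eight,
      Matrix.cons_val_zero, Matrix.cons_val_one, Matrix.head_cons,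
      Matrix.cons_val_two, Matrix.tail_cons, Matrix.cons_val_three,
      Matrix.cons_val_four, v8_5, v8_6, v8_7]
    rw [hZ]
    simp only [Complex.normSq_ofReal, Complex.normSq_zero, add_zero, zero_add,
      mul_zero]
    rw [hμdef]
    push_cast
    rw [show ((ε:ℂ)*ε) = (ε:ℂ)^2 from (sq (ε:ℂ)).symm]
    field_simp [h1c' ε]
    ring
  have hρ1 : ∀ ε : ℝ, ρ 1 (zseq ε) = μ * ((1 / (1 + ε ^ 2) : ℝ) : ℂ) := by
    intro ε
    simp only [hρdef, hrldef, hrdef, hz1, Fin.sum_univ_eight,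
      Matrix.cons_val_zero, Matrix.cons_val_one, Matrix.head_cons,
      Matrix.cons_val_two, Matrix.tail_cons, Matrix.cons_val_three,
      Matrix.cons_val_four, v8_5, v8_6, v8_7]
    rw [hZ]
    simp only [Complex.normSq_ofReal, Complex.normSq_zero, add_zero, zero_add,
      mul_zero]
    rw [hμdef]
    push_cast
    rw [show ((ε:ℂ)*ε) = (ε:ℂ)^2 from (sq (ε:ℂ)).symm]
    field_simp [h1c' ε]
    ring
  have hρ0' : ∀ ε : ℝ, ρ 0 (zseq' ε) = -μ * ((ε ^ 2 / (1 + ε ^ 2) : ℝ) : ℂ) := by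
    intro ε
    simp only [hρdef, hrldef, hrdef, hz2, Fin.sum_univ_eight,
      Matrix.cons_val_zero, Matrix.cons_val_one, Matrix.head_cons,
      Matrix.cons_val_two, Matrix.tail_cons, Matrix.cons_val_three,
      Matrix.cons_val_four, v8_5, v8_6, v8_7]
    rw [hZ]
    simp only [Complex.normSq_ofReal, Complex.normSq_zero, add_zero, zero_add,
      mul_zero]
    rw [hμdef]
    push_cast
    rw [show ((ε:ℂ)*ε) = (ε:ℂ)^2 from (sq (ε:ℂ)).symm]
    field_simp [h1c' ε]
    ring
  have hρ1' : ∀ ε : ℝ, ρ 1 (zseq' ε) = μ * ((1 / (1 + ε ^ 2) : ℝ) : ℂ) := by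
    intro ε
    simp only [hρdef, hrldef, hrdef, hz2, Fin.sum_univ_eight,
      Matrix.cons_val_zero, Matrix.cons_val_one, Matrix.head_cons,
      Matrix.cons_val_two, Matrix.tail_cons, Matrix.cons_val_three,
      Matrix.cons_val_four, v8_5, v8_6, v8_7]
    rw [hZ]
    simp only [Complex.normSq_ofReal, Complex.normSq_zero, add_zero, zero_add,
      mul_zero]
    rw [hμdef]
    push_cast
    rw [show ((ε:ℂ)*ε) = (ε:ℂ)^2 from (sq (ε:ℂ)).symm]
    field_simp [h1c' ε]
    ring
  -- Part 1 : big-O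
  have part1 : (fun ε : ℝ => ρ 0 (zseq ε)) =O[𝓝[>] (0 : ℝ)] fun ε => ε ^ 2 := by
    refine IsBigO.of_bound ‖μ‖ (Eventually.of_forall fun ε => ?_)
    rw [hρ0 ε]
    simp only [norm_neg, norm_mul, Complex.norm_real, Real.norm_eq_abs]
    rw [_root_.abs_of_nonneg (by positivity : (0 : ℝ) ≤ ε ^ 2 / (1 + ε ^ 2)),
      _root_.abs_of_nonneg (sq_nonneg ε)]
    have h := div_le_self (sq_nonneg ε)
      (by nlinarith [sq_nonneg ε] : (1 : ℝ) ≤ 1 + ε ^ 2)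
    exact mul_le_mul_of_nonneg_left h (norm_nonneg μ)
  -- Part 2 : limit of ρ 1
  have part2 : Tendsto (fun ε : ℝ => ρ 1 (zseq ε)) (𝓝[>] (0 : ℝ)) (𝓝 μ) := by
    have hcont : Continuous fun ε : ℝ => μ * ((1 / (1 + ε ^ 2) : ℝ) : ℂ) := by
      refine continuous_const.mul (Complex.continuous_ofReal.comp ?_)
      exact continuous_const.div (by fun_prop) fun ε => (h1 ε).ne'
    have h0 := hcont.tendsto 0
    rw [show μ * ((1 / (1 + (0:ℝ) ^ 2) : ℝ) : ℂ) = μ by norm_num] at h0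
    exact (h0.mono_left nhdsWithin_le_nhds).congr fun ε => (hρ1 ε).symm
  -- Part 4 : limit of T along zseq
  set c : ℝ → Fin 8 → ℂ :=
    fun ε => ![μ * (ε : ℂ) * Z 1, -(μ * (ε : ℂ)) * Z 0, 0, μ, 0, 0, 0, 0] with hcdef
  have hc : ∀ j, Continuous fun ε : ℝ => c ε j := by
    intro j
    fin_cases j
    · show Continuous fun ε : ℝ => μ * (ε : ℂ) * Z 1; fun_prop
    · show Continuous fun ε : ℝ => -(μ * (ε : ℂ)) * Z 0; fun_prop
    · exact continuous_const
    · exact continuous_const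
    · exact continuous_const
    · exact continuous_const
    · exact continuous_const
    · exact continuous_const
  have hS0 : (∑ l, Complex.normSq (c 0 l)) = Complex.normSq μ := by
    simp [hcdef, Fin.sum_univ_eight, v8_5, v8_6, v8_7]
  have hSne : (∑ l, Complex.normSq (c 0 l)) ≠ 0 := by
    rw [hS0]; exact (Complex.normSq_pos.mpr hμ).ne'
  have heq : (fun j k => c 0 j * (starRingEnd ℂ) (c 0 k) /
      ((∑ l, Complex.normSq (c 0 l) : ℝ) : ℂ) : Matrix (Fin 8) (Fin 8) ℂ)
      = Matrix.single 3 3 (1 : ℂ) := by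
    rw [hS0]
    funext j k
    fin_cases j <;> fin_cases k <;>
      simp [hcdef, Matrix.single, v8_5, v8_6, v8_7, Complex.mul_conj,
        Complex.ofReal_ne_zero, (Complex.normSq_pos.mpr hμ).ne']
  have hmatlim : Tendsto (fun ε : ℝ => (fun j k =>
      c ε j * (starRingEnd ℂ) (c ε k) /
      ((∑ l, Complex.normSq (c ε l) : ℝ) : ℂ) : Matrix (Fin 8) (Fin 8) ℂ))
      (𝓝 0) (𝓝 (Matrix.single 3 3 (1 : ℂ))) := by
    rw [← heq]; exact keyTendsto c hc hSne
  have part4 : Tendsto (fun ε : ℝ => T (zseq ε)) (𝓝[>] (0 : ℝ))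
      (𝓝 (Matrix.single 3 3 (1 : ℂ))) := by
    refine Tendsto.congr' ?_ (hmatlim.mono_left nhdsWithin_le_nhds)
    filter_upwards [self_mem_nhdsWithin] with ε hε
    have hεpos : (0 : ℝ) < ε := hε
    have htne : ε / (1 + ε ^ 2) ≠ 0 := by positivity
    have hb : ∀ j, b (zseq ε) j = ((ε / (1 + ε ^ 2) : ℝ) : ℂ) * c ε j := by
      intro j
      fin_cases j
      · show -(ρ 0 (zseq ε)) * Z 1
            = ((ε / (1 + ε ^ 2) : ℝ) : ℂ) * (μ * (ε : ℂ) * Z 1)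
        rw [hρ0 ε]; push_cast; field_simp [h1c' ε]
      · show ρ 0 (zseq ε) * Z 0
            = ((ε / (1 + ε ^ 2) : ℝ) : ℂ) * (-(μ * (ε : ℂ)) * Z 0)
        rw [hρ0 ε]; push_cast; field_simp [h1c' ε]
      · show -(ρ 1 (zseq ε)) * 0 = ((ε / (1 + ε ^ 2) : ℝ) : ℂ) * 0
        simp
      · show ρ 1 (zseq ε) * (ε : ℂ) = ((ε / (1 + ε ^ 2) : ℝ) : ℂ) * μ
        rw [hρ1 ε]; push_cast; field_simp [h1c' ε]
      · show -(ρ 2 (zseq ε)) * 0 = ((ε / (1 + ε ^ 2) : ℝ) : ℂ) * 0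
        simp
      · show ρ 2 (zseq ε) * 0 = ((ε / (1 + ε ^ 2) : ℝ) : ℂ) * 0
        simp
      · show -(ρ 3 (zseq ε)) * 0 = ((ε / (1 + ε ^ 2) : ℝ) : ℂ) * 0
        simp
      · show ρ 3 (zseq ε) * 0 = ((ε / (1 + ε ^ 2) : ℝ) : ℂ) * 0
        simp
    have hsum : (∑ l, Complex.normSq (b (zseq ε) l))
        = (ε / (1 + ε ^ 2)) ^ 2 * ∑ l, Complex.normSq (c ε l) := by
      rw [show (∑ l, Complex.normSq (b (zseq ε) l))
          = ∑ l, (ε / (1 + ε ^ 2)) ^ 2 * Complex.normSq (c ε l) from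
        Finset.sum_congr rfl fun l _ => by
          rw [hb l, Complex.normSq_mul, Complex.normSq_ofReal]; ring]
      rw [← Finset.mul_sum]
    funext j k
    have hT : T (zseq ε) j k = b (zseq ε) j * (starRingEnd ℂ) (b (zseq ε) k) /
        ((∑ l, Complex.normSq (b (zseq ε) l) : ℝ) : ℂ) := rfl
    show c ε j * (starRingEnd ℂ) (c ε k) /
        ((∑ l, Complex.normSq (c ε l) : ℝ) : ℂ) = T (zseq ε) j k
    rw [hT, hb j, hb k, hsum]
    exact (quot_cancel _ htne _ _ _).symm
  -- Part 5 : limit of T along zseq'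
  set c' : ℝ → Fin 8 → ℂ :=
    fun ε => ![μ * (ε : ℂ) * Z 1, -(μ * (ε : ℂ)) * Z 0, -μ, 0, 0, 0, 0, 0] with hcdef'
  have hc' : ∀ j, Continuous fun ε : ℝ => c' ε j := by
    intro j
    fin_cases j
    · show Continuous fun ε : ℝ => μ * (ε : ℂ) * Z 1; fun_prop
    · show Continuous fun ε : ℝ => -(μ * (ε : ℂ)) * Z 0; fun_prop
    · exact continuous_const
    · exact continuous_const
    · exact continuous_const
    · exact continuous_const
    · exact continuous_const
    · exact continuous_const
  have hS0' : (∑ l, Complex.normSq (c' 0 l)) = Complex.normSq μ := by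
    simp [hcdef', Fin.sum_univ_eight, v8_5, v8_6, v8_7]
  have hSne' : (∑ l, Complex.normSq (c' 0 l)) ≠ 0 := by
    rw [hS0']; exact (Complex.normSq_pos.mpr hμ).ne'
  have heq' : (fun j k => c' 0 j * (starRingEnd ℂ) (c' 0 k) /
      ((∑ l, Complex.normSq (c' 0 l) : ℝ) : ℂ) : Matrix (Fin 8) (Fin 8) ℂ)
      = Matrix.single 2 2 (1 : ℂ) := by
    rw [hS0']
    funext j k
    fin_cases j <;> fin_cases k <;>
      simp [hcdef', Matrix.single, v8_5, v8_6, v8_7, Complex.mul_conj,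
        Complex.ofReal_ne_zero, (Complex.normSq_pos.mpr hμ).ne']
  have hmatlim' : Tendsto (fun ε : ℝ => (fun j k =>
      c' ε j * (starRingEnd ℂ) (c' ε k) /
      ((∑ l, Complex.normSq (c' ε l) : ℝ) : ℂ) : Matrix (Fin 8) (Fin 8) ℂ))
      (𝓝 0) (𝓝 (Matrix.single 2 2 (1 : ℂ))) := by
    rw [← heq']; exact keyTendsto c' hc' hSne'
  have part5 : Tendsto (fun ε : ℝ => T (zseq' ε)) (𝓝[>] (0 : ℝ))
      (𝓝 (Matrix.single 2 2 (1 : ℂ))) := by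
    refine Tendsto.congr' ?_ (hmatlim'.mono_left nhdsWithin_le_nhds)
    filter_upwards [self_mem_nhdsWithin] with ε hε
    have hεpos : (0 : ℝ) < ε := hε
    have htne : ε / (1 + ε ^ 2) ≠ 0 := by positivity
    have hb : ∀ j, b (zseq' ε) j = ((ε / (1 + ε ^ 2) : ℝ) : ℂ) * c' ε j := by
      intro j
      fin_cases j
      · show -(ρ 0 (zseq' ε)) * Z 1
            = ((ε / (1 + ε ^ 2) : ℝ) : ℂ) * (μ * (ε : ℂ) * Z 1)
        rw [hρ0' ε]; push_cast; field_simp [h1c' ε]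
      · show ρ 0 (zseq' ε) * Z 0
            = ((ε / (1 + ε ^ 2) : ℝ) : ℂ) * (-(μ * (ε : ℂ)) * Z 0)
        rw [hρ0' ε]; push_cast; field_simp [h1c' ε]
      · show -(ρ 1 (zseq' ε)) * (ε : ℂ) = ((ε / (1 + ε ^ 2) : ℝ) : ℂ) * -μ
        rw [hρ1' ε]; push_cast; field_simp [h1c' ε]
      · show ρ 1 (zseq' ε) * 0 = ((ε / (1 + ε ^ 2) : ℝ) : ℂ) * 0
        simp
      · show -(ρ 2 (zseq' ε)) * 0 = ((ε / (1 + ε ^ 2) : ℝ) : ℂ) * 0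
        simp
      · show ρ 2 (zseq' ε) * 0 = ((ε / (1 + ε ^ 2) : ℝ) : ℂ) * 0
        simp
      · show -(ρ 3 (zseq' ε)) * 0 = ((ε / (1 + ε ^ 2) : ℝ) : ℂ) * 0
        simp
      · show ρ 3 (zseq' ε) * 0 = ((ε / (1 + ε ^ 2) : ℝ) : ℂ) * 0
        simp
    have hsum : (∑ l, Complex.normSq (b (zseq' ε) l))
        = (ε / (1 + ε ^ 2)) ^ 2 * ∑ l, Complex.normSq (c' ε l) := by
      rw [show (∑ l, Complex.normSq (b (zseq' ε) l))
          = ∑ l, (ε / (1 + ε ^ 2)) ^ 2 * Complex.normSq (c' ε l) from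
        Finset.sum_congr rfl fun l _ => by
          rw [hb l, Complex.normSq_mul, Complex.normSq_ofReal]; ring]
      rw [← Finset.mul_sum]
    funext j k
    have hT : T (zseq' ε) j k = b (zseq' ε) j * (starRingEnd ℂ) (b (zseq' ε) k) /
        ((∑ l, Complex.normSq (b (zseq' ε) l) : ℝ) : ℂ) := rfl
    show c' ε j * (starRingEnd ℂ) (c' ε k) /
        ((∑ l, Complex.normSq (c' ε l) : ℝ) : ℂ) = T (zseq' ε) j k
    rw [hT, hb j, hb k, hsum]
    exact (quot_cancel _ htne _ _ _).symm
  refine ⟨part1, part2, hμ, part4, part5, ?_⟩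
  rintro ⟨L, hL1, hL2⟩
  have e1 := tendsto_nhds_unique hL1 part4
  have e2 := tendsto_nhds_unique hL2 part5
  rw [e1] at e2
  have e3 := congrFun (congrFun e2 3) 3
  simp [Matrix.single] at e3
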